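/- Let k be an integer with 0 ≤ k ≤ m-1, and define a = (γ^(2m+3k+2) + γ^(m+6k+4) + 1)/(3γ^(m+3k+2)), b = (γ^(2m) + γ^(m+6k+4) + γ^(3k+2))/(3γ^(m+3k+2)), c = (γ^(6k+4) + γ^(3k+2) + 1)/(3γ^(3k+2)) in F_q, and let g(x) = a·x^(2m+1) + b·x^(m+1) + c·x. Then for every integer i with 0 ≤ i ≤ m-1 one has g(γ^(3i)) = γ^(3(i+k)+2). -/

import Mathlib

theorem stmt6 (q m : ℕ) (F : Type*) [Field F] [Fintype F]
    (hq : Fintype.card F = q) (hodd : Odd q) (hq3 : q % 3 = 1)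
    (hm : m = (q - 1) / 3)
    (γ : Fˣ) (hγ : ∀ x : Fˣ, x ∈ Subgroup.zpowers γ)
    (k : ℕ) (hk : k ≤ m - 1)
    (a b c : F)
    (ha : a = ((γ : F)^(2*m+3*k+2) + (γ : F)^(m+6*k+4) + 1) / (3 * (γ : F)^(m+3*k+2)))
    (hb : b = ((γ : F)^(2*m) + (γ : F)^(m+6*k+4) + (γ : F)^(3*k+2)) / (3 * (γ : F)^(m+3*k+2)))
    (hc : c = ((γ : F)^(6*k+4) + (γ : F)^(3*k+2) + 1) / (3 * (γ : F)^(3*k+2)))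
    (g : F → F)
    (hg : ∀ x : F, g x = a * x^(2*m+1) + b * x^(m+1) + c * x) :
    ∀ i : ℕ, i ≤ m - 1 → g ((γ : F)^(3*i)) = (γ : F)^(3*(i+k)+2) := by
  have hγ0 : (γ : F) ≠ 0 := Units.ne_zero γ
  -- q ≥ 4
  have hq2 : 2 ≤ q := hq ▸ Fintype.one_lt_card
  have hq4 : 4 ≤ q := by omega
  have h3m : 3 * m = q - 1 := by omega
  have hm0 : 0 < m := by omega
  -- 3 ≠ 0 in F
  have hcard : ((q : ℕ) : F) = 0 := by rw [← hq]; exact Nat.cast_card_eq_zero F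
  have h3 : (3 : F) ≠ 0 := by
    intro h
    have : ((q : ℕ) : F) = 3 * ((q / 3 : ℕ) : F) + 1 := by
      rw [← Nat.cast_ofNat, ← Nat.cast_mul, ← Nat.cast_one, ← Nat.cast_add]
      congr 1; omega
    rw [hcard, h] at this
    simp at this
  -- γ^(q-1) = 1
  have hpow : (γ : F) ^ (3 * m) = 1 := by
    rw [h3m, ← hq]; exact FiniteField.pow_card_sub_one_eq_one _ hγ0
  -- orderOf γ = q - 1
  have horder : orderOf γ = q - 1 := by
    classical
    rw [orderOf_eq_card_of_forall_mem_zpowers hγ]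
    rw [Nat.card_eq_fintype_card, Fintype.card_units, hq]
  have hne1 : (γ : F) ^ m ≠ 1 := by
    intro h
    have : γ ^ m = 1 := Units.ext (by simpa using h)
    have := orderOf_dvd_of_pow_eq_one this
    rw [horder] at this
    have := Nat.le_of_dvd hm0 this
    omega
  -- ω relation
  have hω : ((γ : F) ^ m) ^ 2 + (γ : F) ^ m + 1 = 0 := by
    have hcube : ((γ : F) ^ m) ^ 3 = 1 := by rw [← pow_mul, mul_comm]; exact hpow
    have hfac : ((γ : F) ^ m - 1) * (((γ : F) ^ m) ^ 2 + (γ : F) ^ m + 1) = 0 := by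
      linear_combination hcube
    rcases mul_eq_zero.mp hfac with h | h
    · exact absurd (sub_eq_zero.mp h) hne1
    · exact h
  have key : a + b + c = (γ : F) ^ (3 * k + 2) := by
    rw [ha, hb, hc]
    obtain ⟨w, hw⟩ : ∃ w : F, w = (γ:F)^m := ⟨_, rfl⟩
    obtain ⟨x, hx⟩ : ∃ x : F, x = (γ:F)^(3*k+2) := ⟨_, rfl⟩
    have hω' : w^2 + w + 1 = 0 := by rw [hw]; exact hω
    have hw0 : w ≠ 0 := by rw [hw]; exact pow_ne_zero _ hγ0
    have hx0 : x ≠ 0 := by rw [hx]; exact pow_ne_zero _ hγ0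
    have e1 : (γ : F) ^ (2*m+3*k+2) = w^2 * x := by
      rw [hw, hx, ← pow_mul, ← pow_add]; congr 1; omega
    have e2 : (γ : F) ^ (m+6*k+4) = w * x^2 := by
      rw [hw, hx, ← pow_mul, ← pow_add]; congr 1; omega
    have e3 : (γ : F) ^ (m+3*k+2) = w * x := by
      rw [hw, hx, ← pow_add]; congr 1
    have e4 : (γ : F) ^ (6*k+4) = x^2 := by
      rw [hx, ← pow_mul]; congr 1; omega
    have e5 : (γ : F) ^ (2*m) = w^2 := by
      rw [hw, ← pow_mul]; congr 1; omega
    rw [e1, e2, e3, e4, e5, ← hx]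
    field_simp
    linear_combination (1 + x) * hω'
  intro i hi
  rw [hg]
  have p1 : ((γ : F) ^ (3*i)) ^ (2*m+1) = (γ:F)^(3*i) := by
    rw [← pow_mul]
    have : 3*i*(2*m+1) = 3*m*(2*i) + 3*i := by ring
    rw [this, pow_add, pow_mul, hpow, one_pow, one_mul]
  have p2 : ((γ : F) ^ (3*i)) ^ (m+1) = (γ:F)^(3*i) := by
    rw [← pow_mul]
    have : 3*i*(m+1) = 3*m*i + 3*i := by ring
    rw [this, pow_add, pow_mul, hpow, one_pow, one_mul]
  rw [p1, p2]
  have : a * (γ:F)^(3*i) + b * (γ:F)^(3*i) + c * (γ:F)^(3*i) = (a+b+c) * (γ:F)^(3*i) := by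
    ring
  rw [this, key, ← pow_add]
  congr 1; ring
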